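/- Let f : ℝ^l → ℝ^n with n ≤ l be strictly differentiable at a point z̄ and suppose the strict derivative ∇f(z̄) : ℝ^l → ℝ^n is surjective. Then the exact covering bound of f around z̄ equals min{‖∇f(z̄)* v‖ : v ∈ ℝ^n, ‖v‖ = 1}, where ∇f(z̄)* : ℝ^n → ℝ^l is the adjoint (transpose) of ∇f(z̄) with respect to the Euclidean inner products; that is, the supremum of all moduli κ > 0 for which f is linearly open around z̄ with modulus κ equals min{‖∇f(z̄)* v‖ : ‖v‖ = 1}. -/

import Mathlib

open Metric Set Filter

noncomputable section

/-- `ℝ^n` with the Euclidean norm. -/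
abbrev Euc (n : ℕ) : Type := EuclideanSpace ℝ (Fin n)

/-- `ℝ^n × ℝ^m` identified with `ℝ^{n+m}` with its Euclidean norm. -/
abbrev EucProd (n m : ℕ) : Type := WithLp 2 (Euc n × Euc m)

/-- Build a point of `ℝ^n × ℝ^m`. -/
def mkProd {n m : ℕ} (x : Euc n) (u : Euc m) : EucProd n m :=
  (WithLp.equiv 2 (Euc n × Euc m)).symm (x, u)

def pFst {n m : ℕ} (p : EucProd n m) : Euc n := ((WithLp.equiv 2 (Euc n × Euc m)) p).1

def pSnd {n m : ℕ} (p : EucProd n m) : Euc m := ((WithLp.equiv 2 (Euc n × Euc m)) p).2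

/-- View a plain vector as a point of Euclidean space. -/
def vecE {n : ℕ} (v : Fin n → ℝ) : Euc n := WithLp.toLp 2 v

/-- `f` is linearly open around `z` with modulus `κ > 0`: on some neighborhood `U` of `z`,
`B_{κ r}(f w) ⊆ f (B_r w)` whenever `w ∈ U`, `r > 0`, and `B_r w ⊆ U`. -/
def LinOpenWith {E F : Type*} [NormedAddCommGroup E] [NormedAddCommGroup F]
    (f : E → F) (z : E) (κ : ℝ) : Prop :=
  0 < κ ∧ ∃ U ∈ nhds z, ∀ w ∈ U, ∀ r : ℝ, 0 < r → closedBall w r ⊆ U →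
      closedBall (f w) (κ * r) ⊆ f '' closedBall w r

/-- `f` is linearly open around `z` (with some modulus `κ > 0`). -/
def LinOpenAround {E F : Type*} [NormedAddCommGroup E] [NormedAddCommGroup F]
    (f : E → F) (z : E) : Prop :=
  ∃ κ : ℝ, LinOpenWith f z κ

/-- `f` is `C¹` on an open neighborhood of `z`. -/
def C1Near {E F : Type*} [NormedAddCommGroup E] [NormedSpace ℝ E]
    [NormedAddCommGroup F] [NormedSpace ℝ F] (f : E → F) (z : E) : Prop :=
  ∃ U : Set E, IsOpen U ∧ z ∈ U ∧ ContDiffOn ℝ 1 f U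

/-- The partial Jacobian matrix `A = ∂f/∂x(0,0)`. -/
def xJac {n m : ℕ} (f : EucProd n m → Euc n) : Matrix (Fin n) (Fin n) ℝ :=
  Matrix.of fun i j => fderiv ℝ f 0 (mkProd (EuclideanSpace.single j 1) 0) i

/-- The partial Jacobian matrix `B = ∂f/∂u(0,0)`. -/
def uJac {n m : ℕ} (f : EucProd n m → Euc n) : Matrix (Fin n) (Fin m) ℝ :=
  Matrix.of fun i j => fderiv ℝ f 0 (mkProd 0 (EuclideanSpace.single j 1)) i

/-- The set of complex eigenvalues of a real matrix. -/
def specC {n : ℕ} (A : Matrix (Fin n) (Fin n) ℝ) : Set ℂ :=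
  spectrum ℂ (A.map (Complex.ofReal : ℝ → ℂ))

/-- Local exponential stabilizability of `ẋ = f(x,u)` by stationary feedback laws
satisfying the regularity predicate `P`. -/
def ExpStabWith {n m : ℕ} (f : EucProd n m → Euc n) (P : (Euc n → Euc m) → Prop) : Prop :=
  ∃ u : Euc n → Euc m, P u ∧ u 0 = 0 ∧
    ∃ α : ℝ, 0 < α ∧ ∃ M : ℝ, 0 < M ∧ ∃ δ : ℝ, 0 < δ ∧
      ∀ x₀ : Euc n, ‖x₀‖ < δ →
        ∃ x : ℝ → Euc n,
          (x 0 = x₀ ∧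
            ∀ t ∈ Ici (0:ℝ), HasDerivWithinAt x (f (mkProd (x t) (u (x t)))) (Ici 0) t) ∧
          (∀ y : ℝ → Euc n,
            (y 0 = x₀ ∧
              ∀ t ∈ Ici (0:ℝ), HasDerivWithinAt y (f (mkProd (y t) (u (y t)))) (Ici 0) t) →
            ∀ t ∈ Ici (0:ℝ), y t = x t) ∧
          ∀ t ∈ Ici (0:ℝ), ‖x t‖ ≤ M * Real.exp (-α * t) * ‖x₀‖

/-- Local exponential stabilizability by continuous stationary feedback laws. -/
def ExpStabCont {n m : ℕ} (f : EucProd n m → Euc n) : Prop :=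
  ExpStabWith f Continuous

/-- Local exponential stabilizability by `C¹` stationary feedback laws. -/
def ExpStabC1 {n m : ℕ} (f : EucProd n m → Euc n) : Prop :=
  ExpStabWith f (fun u => ContDiff ℝ 1 u)

/-- Local asymptotic stabilizability of `ẋ = f(x,u)` by `C¹` stationary feedback laws. -/
def AsympStabC1 {n m : ℕ} (f : EucProd n m → Euc n) : Prop :=
  ∃ u : Euc n → Euc m, ContDiff ℝ 1 u ∧ u 0 = 0 ∧
    ((∀ ε : ℝ, 0 < ε → ∃ δ : ℝ, 0 < δ ∧ ∀ x : ℝ → Euc n, ‖x 0‖ < δ →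
        (∀ t ∈ Ici (0:ℝ), HasDerivWithinAt x (f (mkProd (x t) (u (x t)))) (Ici 0) t) →
        ∀ t ∈ Ici (0:ℝ), ‖x t‖ < ε) ∧
      ∃ δ₀ : ℝ, 0 < δ₀ ∧ ∀ x : ℝ → Euc n, ‖x 0‖ < δ₀ →
        (∀ t ∈ Ici (0:ℝ), HasDerivWithinAt x (f (mkProd (x t) (u (x t)))) (Ici 0) t) →
        Tendsto x atTop (nhds 0))

/-- Local asymptotic stabilizability of the discrete-time system `x_{k+1} = f(x_k,u_k)`
by continuous stationary feedback laws. -/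
def DiscAsympStabCont {n m : ℕ} (f : EucProd n m → Euc n) : Prop :=
  ∃ u : Euc n → Euc m, Continuous u ∧ u 0 = 0 ∧
    ((∀ ε : ℝ, 0 < ε → ∃ δ : ℝ, 0 < δ ∧ ∀ x₀ : Euc n, ‖x₀‖ < δ →
        ∀ k : ℕ, ‖(fun x => f (mkProd x (u x)))^[k] x₀‖ < ε) ∧
      ∃ δ₀ : ℝ, 0 < δ₀ ∧ ∀ x₀ : Euc n, ‖x₀‖ < δ₀ →
        Tendsto (fun k => (fun x => f (mkProd x (u x)))^[k] x₀) atTop (nhds 0))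

set_option maxHeartbeats 1000000 in
/-- the exact covering bound of `f` around `z̄` equals
`min {‖D* v‖ : ‖v‖ = 1}` where `D*` is the adjoint of the (surjective) strict derivative. -/
theorem exact_covering_bound_eq {l n : ℕ} (hn : n ≤ l)
    (f : Euc l → Euc n) (zbar : Euc l) (D : Euc l →L[ℝ] Euc n)
    (hf : HasStrictFDerivAt f D zbar) (hsurj : Function.Surjective D) :
    sSup {κ : ℝ | LinOpenWith f zbar κ} =
      sInf ((fun v : Euc n => ‖ContinuousLinearMap.adjoint D v‖) '' {v : Euc n | ‖v‖ = 1}) := by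
  rcases Nat.eq_zero_or_pos n with hn0 | hn0
  · -- degenerate case n = 0 : both sides are 0 by convention
    subst hn0
    have hsub : Subsingleton (Euc 0) := ⟨fun a b => PiLp.ext fun i => i.elim0⟩
    have hempty : {v : Euc 0 | ‖v‖ = 1} = ∅ := by
      ext v
      simp only [mem_setOf_eq, mem_empty_iff_false, iff_false]
      intro hv
      have hv0 : v = 0 := Subsingleton.elim _ _
      rw [hv0] at hv; simp at hv
    rw [hempty, image_empty, Real.sInf_empty]
    have hS : {κ : ℝ | LinOpenWith f zbar κ} = Ioi 0 := by
      ext κ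
      constructor
      · exact fun h => h.1
      · intro hκ
        refine ⟨hκ, univ, univ_mem, fun w _ r hr _ => ?_⟩
        intro y _
        exact ⟨w, mem_closedBall_self hr.le, (Subsingleton.elim _ _ : f w = y)⟩
    rw [hS]
    exact Real.sSup_of_not_bddAbove (by simpa using not_bddAbove_Ioi (a := (0:ℝ)))
  · set Dstar := ContinuousLinearMap.adjoint D with hDstar
    set K := (fun v : Euc n => ‖Dstar v‖) '' {v : Euc n | ‖v‖ = 1} with hK
    set c := sInf K with hc
    have hsphere : {v : Euc n | ‖v‖ = 1} = sphere (0 : Euc n) 1 := by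
      ext v; simp [mem_sphere_zero_iff_norm]
    have hKcpt : IsCompact K := by
      rw [hK, hsphere]
      exact (isCompact_sphere 0 1).image (continuous_norm.comp Dstar.continuous)
    have hne : K.Nonempty := by
      refine ⟨‖Dstar (EuclideanSpace.single ⟨0, hn0⟩ 1)‖, ⟨_, ?_, rfl⟩⟩
      simp [mem_setOf_eq, EuclideanSpace.norm_single]
    have hcK : c ∈ K := hKcpt.sInf_mem hne
    have hbdd : BddBelow K := ⟨0, by rintro x ⟨v, -, rfl⟩; positivity⟩
    -- adjoint is injective
    have hinj : ∀ v : Euc n, Dstar v = 0 → v = 0 := by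
      intro v hv
      obtain ⟨x, hx⟩ := hsurj v
      have h1 : (inner ℝ v v : ℝ) = inner ℝ (Dstar v) x := by
        rw [hDstar, ContinuousLinearMap.adjoint_inner_left, hx]
      rw [hv, inner_zero_left] at h1
      exact inner_self_eq_zero.mp h1
    have hcpos : 0 < c := by
      obtain ⟨v0, hv0, hcv⟩ := hcK
      rw [← hcv]
      rcases (norm_nonneg (Dstar v0)).lt_or_eq with h | h
      · exact h
      · exfalso
        have hv00 : v0 = 0 := hinj v0 (norm_eq_zero.mp h.symm)
        rw [mem_setOf_eq, hv00] at hv0; simp at hv0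
    -- lower bound on the adjoint
    have hlow : ∀ v : Euc n, c * ‖v‖ ≤ ‖Dstar v‖ := by
      intro v
      rcases eq_or_ne v 0 with rfl | hv
      · simp
      · have hvn : (0:ℝ) < ‖v‖ := norm_pos_iff.mpr hv
        have h1 : c ≤ ‖Dstar (‖v‖⁻¹ • v)‖ := by
          apply csInf_le hbdd
          refine ⟨‖v‖⁻¹ • v, ?_, rfl⟩
          simp [mem_setOf_eq, norm_smul, abs_of_nonneg (inv_nonneg.mpr (norm_nonneg v)),
            inv_mul_cancel₀ hvn.ne']
        rw [map_smul, norm_smul, norm_inv, norm_norm] at h1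
        have h2 := mul_le_mul_of_nonneg_right h1 hvn.le
        rw [mul_comm (‖v‖⁻¹) _, mul_assoc, inv_mul_cancel₀ hvn.ne', mul_one] at h2
        exact h2
    -- existence of a right inverse with good norm bound
    have hri : ∀ y : Euc n, ∃ x : Euc l, D x = y ∧ ‖x‖ ≤ c⁻¹ * ‖y‖ := by
      intro y
      have hker : ∀ w : Euc n, D (Dstar w) = 0 → w = 0 := by
        intro w hw
        have h1 : (inner ℝ (Dstar w) (Dstar w) : ℝ) = inner ℝ w (D (Dstar w)) := by
          rw [hDstar]; exact ContinuousLinearMap.adjoint_inner_left D (Dstar w) w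
        rw [hw, inner_zero_right] at h1
        exact hinj w (inner_self_eq_zero.mp h1)
      have hTi : Function.Injective (D.comp Dstar) := by
        intro a b hab
        have h0 : D.comp Dstar (a - b) = 0 := by rw [map_sub, hab, sub_self]
        exact sub_eq_zero.mp (hker _ (by simpa using h0))
      have hTs : Function.Surjective (D.comp Dstar) := by
        have := LinearMap.surjective_of_injective
          (f := ((D.comp Dstar : Euc n →L[ℝ] Euc n) : Euc n →ₗ[ℝ] Euc n)) hTi
        exact this
      obtain ⟨w, hw⟩ := hTs y
      have hw' : D (Dstar w) = y := by simpa using hw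
      refine ⟨Dstar w, hw', ?_⟩
      have h1 : ‖Dstar w‖ ^ 2 = (inner ℝ w y : ℝ) := by
        rw [← real_inner_self_eq_norm_sq,
          (ContinuousLinearMap.adjoint_inner_left D (Dstar w) w : _), hw']
      have h2 : (inner ℝ w y : ℝ) ≤ ‖w‖ * ‖y‖ := real_inner_le_norm w y
      have h3 : c * ‖w‖ ≤ ‖Dstar w‖ := hlow w
      rcases (norm_nonneg (Dstar w)).eq_or_lt with hX | hX
      · rw [← hX]; positivity
      · rw [inv_mul_eq_div, le_div_iff₀ hcpos]
        have h5 : c * ‖w‖ * ‖y‖ ≤ ‖Dstar w‖ * ‖y‖ :=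
          mul_le_mul_of_nonneg_right h3 (norm_nonneg y)
        nlinarith [norm_nonneg y, norm_nonneg w]
    set g : Euc n → Euc l := fun y => (hri y).choose with hg
    have hg1 : ∀ y, D (g y) = y := fun y => (hri y).choose_spec.1
    have hg2 : ∀ y, ‖g y‖ ≤ c⁻¹ * ‖y‖ := fun y => (hri y).choose_spec.2
    let Dsymm : D.NonlinearRightInverse :=
      { toFun := g
        nnnorm := ⟨c⁻¹, inv_nonneg.mpr hcpos.le⟩
        bound' := hg2
        right_inv' := hg1 }
    have hnn : ((Dsymm.nnnorm : ℝ))⁻¹ = c := by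
      show (c⁻¹)⁻¹ = c
      exact inv_inv c
    -- every κ < c is a modulus of linear openness
    have hmem : ∀ κ : ℝ, 0 < κ → κ < c → LinOpenWith f zbar κ := by
      intro κ hκ hκc
      have hc' : (0:ℝ) < (c - κ)/2 := by linarith
      set c' : NNReal := Real.toNNReal ((c - κ)/2) with hc'def
      have hc'p : 0 < c' := Real.toNNReal_pos.mpr hc'
      have hcc : (c' : ℝ) = (c - κ)/2 := Real.coe_toNNReal _ hc'.le
      obtain ⟨s, hs, happ⟩ := hf.approximates_deriv_on_nhds (c := c') (Or.inr hc'p)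
      obtain ⟨ρ, hρ, hball⟩ := Metric.nhds_basis_closedBall.mem_iff.mp hs
      refine ⟨hκ, ball zbar ρ, ball_mem_nhds _ hρ, ?_⟩
      intro w hw r hr hsubU
      have hsub' : closedBall w r ⊆ s := (hsubU.trans ball_subset_closedBall).trans hball
      have hsurjon := happ.surjOn_closedBall_of_nonlinearRightInverse Dsymm hr.le hsub'
      intro y hy
      refine hsurjon (closedBall_subset_closedBall ?_ hy)
      rw [hnn, hcc]
      exact mul_le_mul_of_nonneg_right (by linarith) hr.le
    -- every modulus κ is ≤ c
    have hub : ∀ κ ∈ {κ : ℝ | LinOpenWith f zbar κ}, κ ≤ c := by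
      rintro κ ⟨hκ, U, hU, hP⟩
      refine le_of_forall_pos_le_add ?_
      intro ε hε
      obtain ⟨s, hs, happ⟩ := hf.approximates_deriv_on_nhds
        (c := Real.toNNReal ε) (Or.inr (Real.toNNReal_pos.mpr hε))
      obtain ⟨r, hr, hrsub⟩ := Metric.nhds_basis_closedBall.mem_iff.mp (inter_mem hU hs)
      have hzU : zbar ∈ U := mem_of_mem_nhds hU
      have hcov := hP zbar hzU r hr (fun x hx => (hrsub hx).1)
      obtain ⟨v0, hv0, hcv⟩ := hcK
      rw [mem_setOf_eq] at hv0
      have hy : f zbar + (κ * r) • v0 ∈ closedBall (f zbar) (κ * r) := by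
        rw [mem_closedBall, dist_eq_norm, add_sub_cancel_left, norm_smul, hv0, mul_one,
          Real.norm_eq_abs, abs_of_nonneg (by positivity)]
      obtain ⟨x, hxball, hxy⟩ := hcov hy
      have hxz : ‖x - zbar‖ ≤ r := by rwa [mem_closedBall, dist_eq_norm] at hxball
      have hxs : x ∈ s := (hrsub hxball).2
      have hzs : zbar ∈ s := (hrsub (mem_closedBall_self hr.le)).2
      have hA : ‖f x - f zbar - D (x - zbar)‖ ≤ ε * ‖x - zbar‖ := by
        have := happ x hxs zbar hzs
        rwa [Real.coe_toNNReal _ hε.le] at this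
      have e1 : (inner ℝ v0 (f x - f zbar) : ℝ) = κ * r := by
        rw [hxy, add_sub_cancel_left, real_inner_smul_right, real_inner_self_eq_norm_sq,
          hv0]
        ring
      have e2 : (inner ℝ v0 (f x - f zbar) : ℝ) =
          inner ℝ v0 (f x - f zbar - D (x - zbar)) + (inner ℝ v0 (D (x - zbar)) : ℝ) := by
        simp only [inner_sub_right]; ring
      have e3 : (inner ℝ v0 (D (x - zbar)) : ℝ) = inner ℝ (Dstar v0) (x - zbar) :=
        (ContinuousLinearMap.adjoint_inner_left D (x - zbar) v0).symm
      have e4 : (inner ℝ v0 (f x - f zbar - D (x - zbar)) : ℝ) ≤ ε * ‖x - zbar‖ :=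
        calc (inner ℝ v0 (f x - f zbar - D (x - zbar)) : ℝ)
            ≤ ‖v0‖ * ‖f x - f zbar - D (x - zbar)‖ := real_inner_le_norm _ _
          _ = ‖f x - f zbar - D (x - zbar)‖ := by rw [hv0, one_mul]
          _ ≤ ε * ‖x - zbar‖ := hA
      have e5 : (inner ℝ (Dstar v0) (x - zbar) : ℝ) ≤ c * ‖x - zbar‖ :=
        calc (inner ℝ (Dstar v0) (x - zbar) : ℝ)
            ≤ ‖Dstar v0‖ * ‖x - zbar‖ := real_inner_le_norm _ _
          _ = c * ‖x - zbar‖ := by rw [show ‖Dstar v0‖ = c from hcv]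
      have h6 : κ * r ≤ ε * ‖x - zbar‖ + c * ‖x - zbar‖ := by
        rw [← e1, e2, e3]; exact add_le_add e4 e5
      have h7 : κ * r ≤ ε * r + c * r :=
        h6.trans (add_le_add (mul_le_mul_of_nonneg_left hxz hε.le)
          (mul_le_mul_of_nonneg_left hxz hcpos.le))
      have h8 : κ * r ≤ (ε + c) * r := by calc κ * r ≤ ε * r + c * r := h7
                                          _ = (ε + c) * r := by ring
      have h9 : κ ≤ ε + c := le_of_mul_le_mul_right h8 hr
      linarith
    -- conclude
    have hSne : {κ : ℝ | LinOpenWith f zbar κ}.Nonempty :=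
      ⟨c/2, hmem _ (by linarith) (by linarith)⟩
    have hSbdd : BddAbove {κ : ℝ | LinOpenWith f zbar κ} := ⟨c, hub⟩
    apply le_antisymm
    · exact csSup_le hSne hub
    · have h1 : Ioo (0:ℝ) c ⊆ {κ | LinOpenWith f zbar κ} := fun κ hκ => hmem κ hκ.1 hκ.2
      calc c = sSup (Ioo (0:ℝ) c) := (csSup_Ioo hcpos).symm
        _ ≤ _ := csSup_le_csSup hSbdd ⟨c/2, by constructor <;> linarith⟩ h1
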